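/- Let G be a connected graph and e an edge of G that is not a bridge. Then χ_dom(G − e) ≤ χ_dom(G) + 2. -/

import Mathlib

open SimpleGraph

/-- A coloring is a dominated coloring if every (nonempty) color class is contained
in the open neighborhood of some vertex. -/
def IsDomColoring {V α : Type*} (G : SimpleGraph V) (C : G.Coloring α) : Prop :=
  ∀ c : α, (∃ u, C u = c) → ∃ v, ∀ u, C u = c → G.Adj v u

/-- The dominated chromatic number of a graph: the least number of colors
in a dominated coloring. -/
noncomputable def domChromatic {V : Type*} (G : SimpleGraph V) : ℕ :=
  sInf {n | ∃ C : G.Coloring (Fin n), IsDomColoring G C}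

theorem domChromatic_deleteEdge_le_add_two {V : Type*} (G : SimpleGraph V) (e : Sym2 V)
    (hG : G.Connected) (he : e ∈ G.edgeSet) (hb : ¬ G.IsBridge e) :
    domChromatic (G.deleteEdges {e}) ≤ domChromatic G + 2 := by
  classical
  induction e using Sym2.ind with
  | _ a b =>
  rw [SimpleGraph.mem_edgeSet] at he
  have hab : G.Adj a b := he
  have hne : a ≠ b := hab.ne
  set G' := G.deleteEdges {s(a, b)} with hG'def
  have hadj' : ∀ x y, G'.Adj x y ↔ G.Adj x y ∧ ¬(x = a ∧ y = b) ∧ ¬(x = b ∧ y = a) := by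
    intro x y
    rw [hG'def, SimpleGraph.deleteEdges_adj]
    simp only [Set.mem_singleton_iff, Sym2.eq_iff]
    tauto
  have hreach : G'.Reachable a b := by
    rw [SimpleGraph.isBridge_iff] at hb
    push_neg at hb
    exact hb
  have hna : ∃ w, G'.Adj w a := by
    obtain ⟨p⟩ := hreach
    cases p with
    | nil => exact absurd rfl hne
    | cons h _ => exact ⟨_, h.symm⟩
  have hnb : ∃ w, G'.Adj w b := by
    obtain ⟨p⟩ := hreach.symm
    cases p with
    | nil => exact absurd rfl hne.symm
    | cons h _ => exact ⟨_, h.symm⟩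
  by_cases hS : {n | ∃ C : G.Coloring (Fin n), IsDomColoring G C}.Nonempty
  · obtain ⟨C, hC⟩ : domChromatic G ∈ {n | ∃ C : G.Coloring (Fin n), IsDomColoring G C} :=
      Nat.sInf_mem hS
    let f : V → Fin (domChromatic G + 2) := fun x =>
      if x = a then ⟨domChromatic G, by omega⟩
      else if x = b then ⟨domChromatic G + 1, by omega⟩
      else ⟨(C x).val, by have := (C x).isLt; omega⟩
    have hfa : f a = ⟨domChromatic G, by omega⟩ := by simp [f]
    have hfb : f b = ⟨domChromatic G + 1, by omega⟩ := by simp [f, hne.symm]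
    have hfo : ∀ x, x ≠ a → x ≠ b →
        f x = ⟨(C x).val, by have := (C x).isLt; omega⟩ := by
      intro x hxa hxb; simp [f, hxa, hxb]
    have hproper : ∀ {x y : V}, G'.Adj x y → f x ≠ f y := by
      intro x y hxy
      obtain ⟨hGxy, hc1, hc2⟩ := (hadj' x y).mp hxy
      have hxny : x ≠ y := hGxy.ne
      by_cases hxa : x = a
      · by_cases hyb : y = b
        · exact absurd ⟨hxa, hyb⟩ hc1
        · by_cases hya : y = a
          · exact absurd (hxa.trans hya.symm) hxny
          · rw [hxa, hfa, hfo y hya hyb]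
            simp only [ne_eq, Fin.mk.injEq]
            have := (C y).isLt; omega
      · by_cases hxb : x = b
        · by_cases hya : y = a
          · exact absurd ⟨hxb, hya⟩ hc2
          · by_cases hyb : y = b
            · exact absurd (hxb.trans hyb.symm) hxny
            · rw [hxb, hfb, hfo y hya hyb]
              simp only [ne_eq, Fin.mk.injEq]
              have := (C y).isLt; omega
        · by_cases hya : y = a
          · rw [hfo x hxa hxb, hya, hfa]
            simp only [ne_eq, Fin.mk.injEq]
            have := (C x).isLt; omega
          · by_cases hyb : y = b
            · rw [hfo x hxa hxb, hyb, hfb]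
              simp only [ne_eq, Fin.mk.injEq]
              have := (C x).isLt; omega
            · rw [hfo x hxa hxb, hfo y hya hyb]
              simp only [ne_eq, Fin.mk.injEq]
              exact fun h => C.valid hGxy (Fin.ext h)
    have hdom : IsDomColoring G' (SimpleGraph.Coloring.mk f fun h => hproper h) := by
      rintro c ⟨u0, hu0⟩
      have hval : ∀ x, (SimpleGraph.Coloring.mk f fun h => hproper h) x = f x := fun _ => rfl
      rw [hval] at hu0
      by_cases h0 : u0 = a
      · obtain ⟨w, hw⟩ := hna
        refine ⟨w, fun x hx => ?_⟩
        rw [hval] at hx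
        have hca : c = ⟨domChromatic G, by omega⟩ := by rw [← hu0, h0, hfa]
        by_cases hxa : x = a
        · rw [hxa]; exact hw
        · exfalso
          by_cases hxb : x = b
          · rw [hxb, hfb, hca] at hx
            simp only [Fin.mk.injEq] at hx
            omega
          · rw [hfo x hxa hxb, hca] at hx
            simp only [Fin.mk.injEq] at hx
            have := (C x).isLt; omega
      · by_cases h1 : u0 = b
        · obtain ⟨w, hw⟩ := hnb
          refine ⟨w, fun x hx => ?_⟩
          rw [hval] at hx
          have hcb : c = ⟨domChromatic G + 1, by omega⟩ := by rw [← hu0, h1, hfb]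
          by_cases hxb : x = b
          · rw [hxb]; exact hw
          · exfalso
            by_cases hxa : x = a
            · rw [hxa, hfa, hcb] at hx
              simp only [Fin.mk.injEq] at hx
              omega
            · rw [hfo x hxa hxb, hcb] at hx
              simp only [Fin.mk.injEq] at hx
              have := (C x).isLt; omega
        · obtain ⟨w, hw⟩ := hC (C u0) ⟨u0, rfl⟩
          refine ⟨w, fun x hx => ?_⟩
          rw [hval] at hx
          have hcu : c = ⟨(C u0).val, by have := (C u0).isLt; omega⟩ := by
            rw [← hu0, hfo u0 h0 h1]
          rw [hcu] at hx
          have hxa : x ≠ a := by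
            intro h; rw [h, hfa] at hx
            simp only [Fin.mk.injEq] at hx
            have := (C u0).isLt; omega
          have hxb : x ≠ b := by
            intro h; rw [h, hfb] at hx
            simp only [Fin.mk.injEq] at hx
            have := (C u0).isLt; omega
          have hCeq : C x = C u0 := by
            rw [hfo x hxa hxb] at hx
            simp only [Fin.mk.injEq] at hx
            exact Fin.ext hx
          exact (hadj' w x).mpr ⟨hw x hCeq, fun h => hxb h.2, fun h => hxa h.2⟩
    exact Nat.sInf_le ⟨SimpleGraph.Coloring.mk f fun h => hproper h, hdom⟩
  · have hempty : {n | ∃ C : G'.Coloring (Fin n), IsDomColoring G' C} = ∅ := by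
      rw [Set.eq_empty_iff_forall_notMem]
      rintro n ⟨C', hC'⟩
      apply hS
      let g : V → Fin (n + 1) := fun x =>
        if x = a then ⟨n, by omega⟩ else ⟨(C' x).val, by have := (C' x).isLt; omega⟩
      have hga : g a = ⟨n, by omega⟩ := by simp [g]
      have hgo : ∀ x, x ≠ a → g x = ⟨(C' x).val, by have := (C' x).isLt; omega⟩ := by
        intro x hxa; simp [g, hxa]
      have hgproper : ∀ {x y : V}, G.Adj x y → g x ≠ g y := by
        intro x y hxy
        have hxny : x ≠ y := hxy.ne
        by_cases hxa : x = a
        · by_cases hya : y = a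
          · exact absurd (hxa.trans hya.symm) hxny
          · rw [hxa, hga, hgo y hya]
            simp only [ne_eq, Fin.mk.injEq]
            have := (C' y).isLt; omega
        · by_cases hya : y = a
          · rw [hgo x hxa, hya, hga]
            simp only [ne_eq, Fin.mk.injEq]
            have := (C' x).isLt; omega
          · have hadjxy : G'.Adj x y :=
              (hadj' x y).mpr ⟨hxy, fun h => hxa h.1, fun h => hya h.2⟩
            rw [hgo x hxa, hgo y hya]
            simp only [ne_eq, Fin.mk.injEq]
            exact fun h => C'.valid hadjxy (Fin.ext h)
      refine ⟨n + 1, SimpleGraph.Coloring.mk g fun h => hgproper h, ?_⟩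
      rintro c ⟨u0, hu0⟩
      have hval : ∀ x, (SimpleGraph.Coloring.mk g fun h => hgproper h) x = g x := fun _ => rfl
      rw [hval] at hu0
      by_cases h0 : u0 = a
      · refine ⟨b, fun x hx => ?_⟩
        rw [hval] at hx
        have hca : c = ⟨n, by omega⟩ := by rw [← hu0, h0, hga]
        by_cases hxa : x = a
        · rw [hxa]; exact hab.symm
        · exfalso
          rw [hgo x hxa, hca] at hx
          simp only [Fin.mk.injEq] at hx
          have := (C' x).isLt; omega
      · obtain ⟨w, hw⟩ := hC' (C' u0) ⟨u0, rfl⟩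
        refine ⟨w, fun x hx => ?_⟩
        rw [hval] at hx
        have hcu : c = ⟨(C' u0).val, by have := (C' u0).isLt; omega⟩ := by
          rw [← hu0, hgo u0 h0]
        rw [hcu] at hx
        have hxa : x ≠ a := by
          intro h; rw [h, hga] at hx
          simp only [Fin.mk.injEq] at hx
          have := (C' u0).isLt; omega
        have hCeq : C' x = C' u0 := by
          rw [hgo x hxa] at hx
          simp only [Fin.mk.injEq] at hx
          exact Fin.ext hx
        exact ((hadj' w x).mp (hw x hCeq)).1
    rw [show domChromatic G' = 0 from by rw [domChromatic, hempty, Nat.sInf_empty]]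
    omega
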